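/- Let D be a linear differential operator of order at most ℓ on smooth functions on ℝ^n, i.e. Df = Σ_{|α|≤ℓ} c_α ∂^α f with smooth coefficient functions c_α : ℝ^n → ℝ indexed by multi-indices α, and let V^{a₁…a_ℓ} be its principal symbol, i.e. the totally symmetric smooth tensor field collecting the order-ℓ coefficients (V^{a₁…a_ℓ} is the coefficient of ∂_{a₁}⋯∂_{a_ℓ}, symmetrized). If Δ∘D = D∘Δ as operators on smooth functions, then V is a Killing ℓ-tensor. -/

import Mathlib

noncomputable section

/-- Partial derivative `∂_a f` in the `a`-th coordinate direction on `ℝⁿ`. -/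
def pd {n : ℕ} (a : Fin n) (f : (Fin n → ℝ) → ℝ) : (Fin n → ℝ) → ℝ :=
  fun x => fderiv ℝ f x (Pi.single a 1)

/-- Raised partial derivative `∂^a f = g^{ab} ∂_b f`. -/
def pdUp {n : ℕ} (ginv : Matrix (Fin n) (Fin n) ℝ) (a : Fin n)
    (f : (Fin n → ℝ) → ℝ) : (Fin n → ℝ) → ℝ :=
  fun x => ∑ b, ginv a b * pd b f x

/-- Laplace operator `Δ f = g^{ab} ∂_a ∂_b f`. -/
def lap {n : ℕ} (ginv : Matrix (Fin n) (Fin n) ℝ) (f : (Fin n → ℝ) → ℝ) :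
    (Fin n → ℝ) → ℝ :=
  fun x => ∑ a, ∑ b, ginv a b * pd a (pd b f) x

/-- Iterated partial derivative `∂_{i 0} ⋯ ∂_{i (m-1)} f` along a tuple of indices. -/
def pdIter {n : ℕ} : (m : ℕ) → (Fin m → Fin n) → ((Fin n → ℝ) → ℝ) → ((Fin n → ℝ) → ℝ)
  | 0, _, f => f
  | m + 1, i, f => pd (i 0) (pdIter m (fun j => i j.succ) f)

/-- A (smooth, totally symmetric) Killing `ℓ`-tensor: `∂^{(a₀} k^{a₁…a_ℓ)} = 0`. -/
def IsKillingTensor {n : ℕ} (ginv : Matrix (Fin n) (Fin n) ℝ) (ℓ : ℕ)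
    (k : (Fin ℓ → Fin n) → (Fin n → ℝ) → ℝ) : Prop :=
  (∀ i, ContDiff ℝ (⊤ : ℕ∞) (k i)) ∧
  (∀ (σ : Equiv.Perm (Fin ℓ)) (i : Fin ℓ → Fin n), k (i ∘ σ) = k i) ∧
  (∀ (i : Fin (ℓ + 1) → Fin n) (x : Fin n → ℝ),
    ∑ σ : Equiv.Perm (Fin (ℓ + 1)),
      pdUp ginv (i (σ 0)) (k (fun j => i (σ j.succ))) x = 0)

end

abbrev Sm {n : ℕ} (f : (Fin n → ℝ) → ℝ) : Prop := ContDiff ℝ (⊤ : ℕ∞) f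

lemma Sm.diff' {n : ℕ} {f : (Fin n → ℝ) → ℝ} (hf : Sm f) : Differentiable ℝ f :=
  (contDiff_infty_iff_fderiv.mp hf).1

lemma Sm.pd' {n : ℕ} {f : (Fin n → ℝ) → ℝ} (hf : Sm f) (a : Fin n) : Sm (pd a f) := by
  have h := (contDiff_infty_iff_fderiv.mp hf).2
  exact h.clm_apply contDiff_const

lemma pd_sum' {n : ℕ} {ι : Type*} (s : Finset ι) (f : ι → (Fin n → ℝ) → ℝ) (a : Fin n)
    (hf : ∀ i ∈ s, Differentiable ℝ (f i)) :
    pd a (fun x => ∑ i ∈ s, f i x) = fun x => ∑ i ∈ s, pd a (f i) x := by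
  funext x
  simp only [pd]
  rw [fderiv_fun_sum (fun i hi => (hf i hi).differentiableAt)]
  simp

lemma pd_mul' {n : ℕ} (u v : (Fin n → ℝ) → ℝ) (a : Fin n)
    (hu : Differentiable ℝ u) (hv : Differentiable ℝ v) :
    pd a (fun x => u x * v x) = fun x => pd a u x * v x + u x * pd a v x := by
  funext x
  simp only [pd]
  rw [fderiv_fun_mul (hu x) (hv x)]
  ring_nf
  simp [pd]
  ring

lemma pd_const_mul' {n : ℕ} (u : (Fin n → ℝ) → ℝ) (r : ℝ) (a : Fin n)
    (hu : Differentiable ℝ u) :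
    pd a (fun x => r * u x) = fun x => r * pd a u x := by
  funext x
  simp only [pd]
  rw [fderiv_const_mul (hu x) r]
  simp

lemma pd_comm' {n : ℕ} {f : (Fin n → ℝ) → ℝ} (hf : Sm f) (a b : Fin n) :
    pd a (pd b f) = pd b (pd a f) := by
  funext x
  have hdf : Differentiable ℝ f := Sm.diff' hf
  have h2 : DifferentiableAt ℝ (fderiv ℝ f) x :=
    ((contDiff_infty_iff_fderiv.mp hf).2.differentiable (by simp)) x
  have key : ∀ v w : Fin n → ℝ,
      fderiv ℝ (fderiv ℝ f) x v w = fderiv ℝ (fderiv ℝ f) x w v :=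
    second_derivative_symmetric (fun y => (hdf y).hasFDerivAt) h2.hasFDerivAt
  have expand : ∀ u v : Fin n → ℝ,
      fderiv ℝ (fun y => fderiv ℝ f y v) x u = fderiv ℝ (fderiv ℝ f) x u v := by
    intro u v
    rw [fderiv_clm_apply h2 (differentiableAt_const v)]
    simp
  have hb : pd b f = fun y => fderiv ℝ f y (Pi.single b 1) := rfl
  have ha : pd a f = fun y => fderiv ℝ f y (Pi.single a 1) := rfl
  simp only [pd, hb, ha]
  rw [expand, expand, key]

lemma pd_add' {n : ℕ} (u v : (Fin n → ℝ) → ℝ) (a : Fin n)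
    (hu : Differentiable ℝ u) (hv : Differentiable ℝ v) :
    pd a (fun x => u x + v x) = fun x => pd a u x + pd a v x := by
  funext x
  simp only [pd]
  rw [fderiv_fun_add (hu x) (hv x)]
  simp

lemma Sm.pdIter' {n : ℕ} {f : (Fin n → ℝ) → ℝ} (hf : Sm f) :
    ∀ (m : ℕ) (j : Fin m → Fin n), Sm (pdIter m j f) := by
  intro m
  induction m with
  | zero => intro j; exact hf
  | succ m ih => intro j; exact (ih _).pd' _

lemma pdIter_succ_last' {n : ℕ} (m : ℕ) (j : Fin (m + 1) → Fin n) (f : (Fin n → ℝ) → ℝ) :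
    pdIter (m + 1) j f
      = pdIter m (fun k => j k.castSucc) (pd (j (Fin.last m)) f) := by
  induction m with
  | zero => rfl
  | succ m ih =>
    show pd (j 0) (pdIter (m + 1) (fun k => j k.succ) f) = _
    rw [ih]
    show _ = pd (j 0) (pdIter m (fun k => j (k.succ.castSucc)) (pd (j (Fin.last (m+1))) f))
    congr 1

lemma pdIter_sum' {n : ℕ} {ι : Type*} (s : Finset ι) (f : ι → (Fin n → ℝ) → ℝ)
    (hf : ∀ i ∈ s, Sm (f i)) :
    ∀ (m : ℕ) (j : Fin m → Fin n),
      pdIter m j (fun x => ∑ i ∈ s, f i x) = fun x => ∑ i ∈ s, pdIter m j (f i) x := by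
  intro m
  induction m with
  | zero => intro j; rfl
  | succ m ih =>
    intro j
    show pd (j 0) (pdIter m (fun k => j k.succ) fun x => ∑ i ∈ s, f i x) = _
    rw [ih]
    rw [pd_sum' s (fun i => pdIter m (fun k => j k.succ) (f i)) (j 0)
      (fun i hi => (Sm.pdIter' (hf i hi) m _).diff')]
    rfl

lemma pdIter_const_mul' {n : ℕ} (u : (Fin n → ℝ) → ℝ) (r : ℝ) (hu : Sm u) :
    ∀ (m : ℕ) (j : Fin m → Fin n),
      pdIter m j (fun x => r * u x) = fun x => r * pdIter m j u x := by
  intro m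
  induction m with
  | zero => intro j; rfl
  | succ m ih =>
    intro j
    show pd (j 0) (pdIter m (fun k => j k.succ) fun x => r * u x) = _
    rw [ih, pd_const_mul' _ r _ ((Sm.pdIter' hu m _).diff')]
    rfl

noncomputable def Ftest {N n : ℕ} (q : Fin N → Fin n) (x₀ : Fin n → ℝ)
    (S : Finset (Fin N)) : (Fin n → ℝ) → ℝ :=
  fun x => ∏ k ∈ S, (x (q k) - x₀ (q k))

lemma sm_Ftest' {N n : ℕ} (q : Fin N → Fin n) (x₀ : Fin n → ℝ) (S : Finset (Fin N)) :
    Sm (Ftest q x₀ S) := by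
  have h : Ftest q x₀ S = ∏ k ∈ S, (fun x : Fin n → ℝ => x (q k) - x₀ (q k)) := by
    funext x; rw [Finset.prod_apply]; rfl
  rw [h]
  apply contDiff_prod'
  intro k _
  exact ((ContinuousLinearMap.proj (R := ℝ) (φ := fun _ : Fin n => ℝ) (q k)).contDiff).sub
    contDiff_const

lemma pd_Ftest' {N n : ℕ} (q : Fin N → Fin n) (x₀ : Fin n → ℝ) (S : Finset (Fin N))
    (a : Fin n) :
    pd a (Ftest q x₀ S)
      = fun x => ∑ k ∈ S, (if q k = a then (1:ℝ) else 0) * Ftest q x₀ (S.erase k) x := by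
  funext x
  have hdiff : ∀ k ∈ S, DifferentiableAt ℝ (fun x : Fin n → ℝ => x (q k) - x₀ (q k)) x :=
    fun k _ => ((ContinuousLinearMap.proj (R := ℝ) (φ := fun _ : Fin n => ℝ)
      (q k)).differentiable.sub_const _).differentiableAt
  have : pd a (Ftest q x₀ S) x
      = (fderiv ℝ (fun x => ∏ k ∈ S, (x (q k) - x₀ (q k))) x) (Pi.single a 1) := rfl
  rw [this, fderiv_finset_prod hdiff]
  rw [ContinuousLinearMap.sum_apply]
  apply Finset.sum_congr rfl
  intro k _
  rw [ContinuousLinearMap.smul_apply]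
  have : fderiv ℝ (fun x : Fin n → ℝ => x (q k) - x₀ (q k)) x
      = ContinuousLinearMap.proj (R := ℝ) (φ := fun _ : Fin n => ℝ) (q k) := by
    have h : HasFDerivAt (fun x : Fin n → ℝ => x (q k) - x₀ (q k))
        (ContinuousLinearMap.proj (R := ℝ) (φ := fun _ : Fin n => ℝ) (q k)) x :=
      ((ContinuousLinearMap.proj (R := ℝ) (φ := fun _ : Fin n => ℝ)
        (q k)).hasFDerivAt).sub_const _
    exact h.fderiv
  rw [this]
  have : (ContinuousLinearMap.proj (R := ℝ) (φ := fun _ : Fin n => ℝ) (q k))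
      (Pi.single a 1) = if q k = a then (1:ℝ) else 0 := by
    simp [Pi.single_apply]
  rw [this]
  simp only [smul_eq_mul]
  rw [mul_comm]
  rfl

lemma pdIter_Ftest_step' {N n : ℕ} (q : Fin N → Fin n) (x₀ : Fin n → ℝ)
    (S : Finset (Fin N)) (m : ℕ) (j : Fin (m + 1) → Fin n) :
    pdIter (m + 1) j (Ftest q x₀ S)
      = fun x => ∑ k ∈ S, (if q k = j (Fin.last m) then (1:ℝ) else 0)
          * pdIter m (fun k' => j k'.castSucc) (Ftest q x₀ (S.erase k)) x := by
  rw [pdIter_succ_last', pd_Ftest']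
  have hsm : ∀ k ∈ S, Sm (fun x => (if q k = j (Fin.last m) then (1:ℝ) else 0)
      * Ftest q x₀ (S.erase k) x) := by
    intro k _
    exact (contDiff_const).mul (sm_Ftest' q x₀ (S.erase k))
  rw [pdIter_sum' S _ hsm]
  funext x
  apply Finset.sum_congr rfl
  intro k _
  rw [pdIter_const_mul' _ _ (sm_Ftest' q x₀ (S.erase k))]

lemma pdIter_Ftest_zero' {N n : ℕ} (q : Fin N → Fin n) (x₀ : Fin n → ℝ) :
    ∀ (m : ℕ) (S : Finset (Fin N)) (j : Fin m → Fin n), m < S.card →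
      pdIter m j (Ftest q x₀ S) x₀ = 0 := by
  intro m
  induction m with
  | zero =>
    intro S j hS
    obtain ⟨k, hk⟩ := Finset.card_pos.mp hS
    exact Finset.prod_eq_zero hk (by simp)
  | succ m ih =>
    intro S j hS
    rw [pdIter_Ftest_step']
    apply Finset.sum_eq_zero
    intro k hk
    rw [ih (S.erase k) _ (by rw [Finset.card_erase_of_mem hk]; omega), mul_zero]

lemma pdIter_Ftest_top' {N n : ℕ} (q : Fin N → Fin n) (x₀ : Fin n → ℝ) :
    ∀ (m : ℕ) (S : Finset (Fin N)) (j : Fin m → Fin n), S.card = m →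
      pdIter m j (Ftest q x₀ S) x₀
        = ∑ e : Fin m → Fin N,
            if Function.Injective e ∧ ∀ k, e k ∈ S then
              ∏ k, (if q (e k) = j k then (1:ℝ) else 0) else 0 := by
  intro m
  induction m with
  | zero =>
    intro S j hS
    rw [Finset.card_eq_zero] at hS
    subst hS
    rw [Fintype.sum_unique]
    have h1 : Function.Injective (default : Fin 0 → Fin N) := fun a => a.elim0
    simp only [h1, true_and]
    rw [if_pos (fun k => k.elim0)]
    show Ftest q x₀ ∅ x₀ = _
    simp [Ftest]
  | succ m ih =>
    intro S j hS
    rw [pdIter_Ftest_step']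
    have hrec : ∀ k ∈ S,
        pdIter m (fun k' => j k'.castSucc) (Ftest q x₀ (S.erase k)) x₀
          = ∑ e : Fin m → Fin N,
              if Function.Injective e ∧ ∀ k', e k' ∈ S.erase k then
                ∏ k', (if q (e k') = j k'.castSucc then (1:ℝ) else 0) else 0 := by
      intro k hk
      exact ih (S.erase k) _ (by rw [Finset.card_erase_of_mem hk]; omega)
    have hcond : ∀ (k : Fin N) (e : Fin m → Fin N),
        (Function.Injective (Fin.snoc e k : Fin (m+1) → Fin N)
            ∧ ∀ k'', (Fin.snoc e k : Fin (m+1) → Fin N) k'' ∈ S)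
          ↔ (k ∈ S ∧ Function.Injective e ∧ ∀ k', e k' ∈ S.erase k) := by
      intro k e
      constructor
      · rintro ⟨hinj, hmem⟩
        refine ⟨by simpa using hmem (Fin.last m), ?_, ?_⟩
        · intro a b hab
          have h2 : (Fin.snoc e k : Fin (m+1) → Fin N) a.castSucc
              = (Fin.snoc e k : Fin (m+1) → Fin N) b.castSucc := by
            rwa [Fin.snoc_castSucc, Fin.snoc_castSucc]
          exact Fin.castSucc_injective _ (hinj h2)
        · intro k'
          rw [Finset.mem_erase]
          refine ⟨?_, by simpa [Fin.snoc_castSucc] using hmem k'.castSucc⟩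
          intro hkk
          have h2 : (Fin.snoc e k : Fin (m+1) → Fin N) k'.castSucc
              = (Fin.snoc e k : Fin (m+1) → Fin N) (Fin.last m) := by
            rw [Fin.snoc_castSucc, Fin.snoc_last, hkk]
          exact absurd (hinj h2) (Fin.ne_of_lt (Fin.castSucc_lt_last k'))
      · rintro ⟨hk, hinj, hmem⟩
        constructor
        · intro a b hab
          induction a using Fin.lastCases with
          | last =>
            induction b using Fin.lastCases with
            | last => rfl
            | cast b =>
              rw [Fin.snoc_last, Fin.snoc_castSucc] at hab
              exact absurd hab.symm (Finset.ne_of_mem_erase (hmem b))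
          | cast a =>
            induction b using Fin.lastCases with
            | last =>
              rw [Fin.snoc_last, Fin.snoc_castSucc] at hab
              exact absurd hab (Finset.ne_of_mem_erase (hmem a))
            | cast b =>
              rw [Fin.snoc_castSucc, Fin.snoc_castSucc] at hab
              rw [hinj hab]
        · intro k''
          induction k'' using Fin.lastCases with
          | last => rwa [Fin.snoc_last]
          | cast k' =>
            rw [Fin.snoc_castSucc]
            exact Finset.mem_of_mem_erase (hmem k')
    calc ∑ k ∈ S, (if q k = j (Fin.last m) then (1:ℝ) else 0)
          * pdIter m (fun k' => j k'.castSucc) (Ftest q x₀ (S.erase k)) x₀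
        = ∑ k : Fin N, (if k ∈ S then (if q k = j (Fin.last m) then (1:ℝ) else 0)
            * pdIter m (fun k' => j k'.castSucc) (Ftest q x₀ (S.erase k)) x₀ else 0) := by
          rw [Finset.sum_ite_mem, Finset.univ_inter]
      _ = ∑ k : Fin N, ∑ e : Fin m → Fin N,
            (if k ∈ S ∧ Function.Injective e ∧ ∀ k', e k' ∈ S.erase k then
              (if q k = j (Fin.last m) then (1:ℝ) else 0)
                * ∏ k', (if q (e k') = j k'.castSucc then (1:ℝ) else 0) else 0) := by
          apply Finset.sum_congr rfl
          intro k _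
          by_cases hk : k ∈ S
          · rw [if_pos hk, hrec k hk, Finset.mul_sum]
            apply Finset.sum_congr rfl
            intro e _
            by_cases hc : Function.Injective e ∧ ∀ k', e k' ∈ S.erase k
            · rw [if_pos hc, if_pos (show k ∈ S ∧ Function.Injective e
                ∧ ∀ k', e k' ∈ S.erase k from ⟨hk, hc⟩)]
            · rw [if_neg hc, mul_zero, if_neg (show ¬(k ∈ S ∧ Function.Injective e
                ∧ ∀ k', e k' ∈ S.erase k) from fun hcc => hc hcc.2)]
          · rw [if_neg hk]
            symm
            apply Finset.sum_eq_zero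
            intro e _
            rw [if_neg (show ¬(k ∈ S ∧ Function.Injective e
              ∧ ∀ k', e k' ∈ S.erase k) from fun hcc => hk hcc.1)]
      _ = ∑ p : Fin N × (Fin m → Fin N),
            (if p.1 ∈ S ∧ Function.Injective p.2 ∧ ∀ k', p.2 k' ∈ S.erase p.1 then
              (if q p.1 = j (Fin.last m) then (1:ℝ) else 0)
                * ∏ k', (if q (p.2 k') = j k'.castSucc then (1:ℝ) else 0) else 0) := by
          rw [Fintype.sum_prod_type]
      _ = ∑ e : Fin (m+1) → Fin N,
            (if Function.Injective e ∧ ∀ k, e k ∈ S then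
              ∏ k, (if q (e k) = j k then (1:ℝ) else 0) else 0) := by
          apply Fintype.sum_equiv (Fin.snocEquiv (fun _ => Fin N))
          intro p
          obtain ⟨k, e⟩ := p
          have hse : (Fin.snocEquiv (fun _ => Fin N)) (k, e) = (Fin.snoc e k : Fin (m+1) → Fin N) := by
            funext u
            rfl
          rw [hse]
          by_cases hc : k ∈ S ∧ Function.Injective e ∧ ∀ k', e k' ∈ S.erase k
          · rw [if_pos hc, if_pos ((hcond k e).mpr hc)]
            rw [Fin.prod_univ_castSucc]
            simp only [Fin.snoc_castSucc, Fin.snoc_last]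
            ring
          · rw [if_neg hc, if_neg (fun hcc => hc ((hcond k e).mp hcc))]

lemma pdIter_Ftest_univ' {M n : ℕ} (q : Fin M → Fin n) (x₀ : Fin n → ℝ) (j : Fin M → Fin n) :
    pdIter M j (Ftest q x₀ Finset.univ) x₀
      = ∑ σ : Equiv.Perm (Fin M), ∏ k, (if q (σ k) = j k then (1:ℝ) else 0) := by
  rw [pdIter_Ftest_top' q x₀ M Finset.univ j (by simp)]
  have h1 : ∀ e : Fin M → Fin M,
      (Function.Injective e ∧ ∀ k, e k ∈ (Finset.univ : Finset (Fin M)))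
        ↔ Function.Injective e := by simp
  calc ∑ e : Fin M → Fin M,
        (if Function.Injective e ∧ ∀ k, e k ∈ (Finset.univ : Finset (Fin M)) then
          ∏ k, (if q (e k) = j k then (1:ℝ) else 0) else 0)
      = ∑ e : Fin M → Fin M, (if Function.Injective e then
          ∏ k, (if q (e k) = j k then (1:ℝ) else 0) else 0) := by
        apply Finset.sum_congr rfl
        intro e _
        rw [if_congr (h1 e) rfl rfl]
    _ = ∑ e ∈ Finset.univ.filter (fun e : Fin M → Fin M => Function.Injective e),
          ∏ k, (if q (e k) = j k then (1:ℝ) else 0) := by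
        rw [Finset.sum_filter]
    _ = ∑ σ : Equiv.Perm (Fin M), ∏ k, (if q (σ k) = j k then (1:ℝ) else 0) := by
        symm
        apply Finset.sum_bij (fun (σ : Equiv.Perm (Fin M)) _ => (σ : Fin M → Fin M))
        · intro σ _
          simp [Finset.mem_filter, σ.injective]
        · intro σ₁ _ σ₂ _ h
          exact Equiv.coe_fn_injective h
        · intro e he
          have hinj : Function.Injective e := (Finset.mem_filter.mp he).2
          have hbij : Function.Bijective e := Finite.injective_iff_bijective.mp hinj
          exact ⟨Equiv.ofBijective e hbij, Finset.mem_univ _, rfl⟩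
        · intro σ _
          rfl

lemma sm_lap' {n : ℕ} (ginv : Matrix (Fin n) (Fin n) ℝ) {f : (Fin n → ℝ) → ℝ} (hf : Sm f) :
    Sm (lap ginv f) := by
  show Sm (fun x => ∑ a, ∑ b, ginv a b * pd a (pd b f) x)
  exact ContDiff.sum fun a _ => ContDiff.sum fun b _ =>
    contDiff_const.mul (((hf.pd' b).pd' a))

lemma pd_lap_comm' {n : ℕ} (ginv : Matrix (Fin n) (Fin n) ℝ) {f : (Fin n → ℝ) → ℝ}
    (hf : Sm f) (a : Fin n) : pd a (lap ginv f) = lap ginv (pd a f) := by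
  have h1 : lap ginv f = fun x => ∑ p : Fin n × Fin n, ginv p.1 p.2 * pd p.1 (pd p.2 f) x := by
    funext x
    rw [Fintype.sum_prod_type]
    rfl
  rw [h1, pd_sum' Finset.univ _ a
    (fun p _ => Sm.diff' (contDiff_const.mul ((hf.pd' p.2).pd' p.1)))]
  funext x
  have h2 : lap ginv (pd a f) x
      = ∑ p : Fin n × Fin n, ginv p.1 p.2 * pd p.1 (pd p.2 (pd a f)) x := by
    rw [Fintype.sum_prod_type]
    rfl
  rw [h2]
  apply Finset.sum_congr rfl
  intro p _
  rw [pd_const_mul' _ _ a (Sm.diff' ((hf.pd' p.2).pd' p.1))]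
  have : pd a (pd p.1 (pd p.2 f)) = pd p.1 (pd p.2 (pd a f)) := by
    rw [pd_comm' (hf.pd' p.2) a p.1, pd_comm' hf a p.2]
  rw [this]

lemma pdIter_lap_comm' {n : ℕ} (ginv : Matrix (Fin n) (Fin n) ℝ) {f : (Fin n → ℝ) → ℝ}
    (hf : Sm f) : ∀ (m : ℕ) (j : Fin m → Fin n),
    pdIter m j (lap ginv f) = lap ginv (pdIter m j f) := by
  intro m
  induction m with
  | zero => intro j; rfl
  | succ m ih =>
    intro j
    show pd (j 0) (pdIter m (fun k => j k.succ) (lap ginv f)) = _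
    rw [ih, pd_lap_comm' ginv (Sm.pdIter' hf m _) (j 0)]
    rfl

lemma prod_delta {n ℓ : ℕ} (t jj : Fin ℓ → Fin n) :
    (∏ k, if t k = jj k then (1:ℝ) else 0) = if t = jj then 1 else 0 := by
  by_cases h : t = jj
  · subst h; simp
  · rw [if_neg h]
    obtain ⟨k, hk⟩ := Function.ne_iff.mp h
    exact Finset.prod_eq_zero (Finset.mem_univ k) (if_neg hk)

lemma pd_pdIter {n : ℕ} (m : ℕ) (a : Fin n) (jj : Fin m → Fin n) (f : (Fin n → ℝ) → ℝ) :
    pd a (pdIter m jj f) = pdIter (m + 1) (Fin.cons a jj) f := by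
  show _ = pd ((Fin.cons a jj : Fin (m+1) → Fin n) 0)
    (pdIter m (fun k => (Fin.cons a jj : Fin (m+1) → Fin n) k.succ) f)
  simp only [Fin.cons_zero, Fin.cons_succ]


/-- if a linear differential operator `D` of order at most `ℓ`
(with smooth coefficients `c`) commutes with the Laplacian on smooth functions,
then its principal symbol (the symmetrization of the order-`ℓ` coefficients)
is a Killing `ℓ`-tensor. -/
theorem stmt0 {n ℓ : ℕ} (hn : 0 < n)
    (g ginv : Matrix (Fin n) (Fin n) ℝ) (hgsym : g.IsSymm) (hginv : g * ginv = 1)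
    (c : (m : Fin (ℓ + 1)) → (Fin (m : ℕ) → Fin n) → (Fin n → ℝ) → ℝ)
    (hc : ∀ m i, ContDiff ℝ (⊤ : ℕ∞) (c m i))
    (D : ((Fin n → ℝ) → ℝ) → ((Fin n → ℝ) → ℝ))
    (hD : ∀ f x, D f x =
      ∑ m : Fin (ℓ + 1), ∑ i : Fin (m : ℕ) → Fin n, c m i x * pdIter (m : ℕ) i f x)
    (V : (Fin ℓ → Fin n) → (Fin n → ℝ) → ℝ)
    (hV : ∀ i x, V i x =
      (ℓ.factorial : ℝ)⁻¹ * ∑ σ : Equiv.Perm (Fin ℓ), c (Fin.last ℓ) (i ∘ σ) x)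
    (hcomm : ∀ f, ContDiff ℝ (⊤ : ℕ∞) f → ∀ x, lap ginv (D f) x = D (lap ginv f) x) :
    IsKillingTensor ginv ℓ V := by
  -- symmetry of ginv
  have hsymg : ∀ a b, ginv a b = ginv b a := by
    have h3 : (Matrix.transpose ginv) * g = 1 := by
      have h5 : (Matrix.transpose ginv) * (Matrix.transpose g) = Matrix.transpose (g * ginv) :=
        (Matrix.transpose_mul g ginv).symm
      rw [hgsym.eq] at h5
      rw [h5, hginv, Matrix.transpose_one]
    have h4 : Matrix.transpose ginv = ginv := by
      calc Matrix.transpose ginv = (Matrix.transpose ginv) * (g * ginv) := by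
            rw [hginv, Matrix.mul_one]
        _ = ((Matrix.transpose ginv) * g) * ginv := by rw [Matrix.mul_assoc]
        _ = ginv := by rw [h3, Matrix.one_mul]
    intro a b
    exact congrFun (congrFun h4 b) a
  -- smoothness of V
  have hVfun : ∀ t : Fin ℓ → Fin n, V t = fun x =>
      (ℓ.factorial : ℝ)⁻¹ * ∑ σ : Equiv.Perm (Fin ℓ), c (Fin.last ℓ) (t ∘ σ) x :=
    fun t => funext (hV t)
  have hVsm : ∀ t, Sm (V t) := by
    intro t
    rw [hVfun t]
    exact contDiff_const.mul (ContDiff.sum fun τ _ => hc (Fin.last ℓ) (t ∘ τ))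
  refine ⟨hVsm, ?_, ?_⟩
  · -- symmetry of V
    intro σ t
    funext x
    rw [hV, hV]
    congr 1
    exact Fintype.sum_equiv (Equiv.mulLeft σ)
      (fun τ => c (Fin.last ℓ) ((t ∘ σ) ∘ τ) x)
      (fun τ => c (Fin.last ℓ) (t ∘ τ) x)
      (fun τ => by congr 1)
  · -- Killing equation
    intro i x₀
    -- the key identity
    have key : ∑ σ : Equiv.Perm (Fin (ℓ + 1)),
        pdUp ginv (i (σ 0)) (c (Fin.last ℓ) (fun j => i (σ j.succ))) x₀ = 0 := by
      set f : (Fin n → ℝ) → ℝ := Ftest i x₀ Finset.univ with hfdef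
      have hf : Sm f := sm_Ftest' i x₀ Finset.univ
      have hsmP : ∀ (m : Fin (ℓ + 1)) (jj : Fin (m : ℕ) → Fin n), Sm (pdIter (m : ℕ) jj f) :=
        fun m jj => Sm.pdIter' hf _ jj
      have hterm : ∀ m jj, Sm (fun x => c m jj x * pdIter (m : ℕ) jj f x) :=
        fun m jj => (hc m jj).mul (hsmP m jj)
      have hDf : D f = fun x => ∑ m : Fin (ℓ + 1), ∑ jj : Fin (m : ℕ) → Fin n,
          c m jj x * pdIter (m : ℕ) jj f x := funext (hD f)
      -- first derivative of D f
      have hpdDf : ∀ b, pd b (D f) = fun x => ∑ m : Fin (ℓ + 1), ∑ jj : Fin (m : ℕ) → Fin n,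
          (pd b (c m jj) x * pdIter (m : ℕ) jj f x
            + c m jj x * pd b (pdIter (m : ℕ) jj f) x) := by
        intro b
        rw [hDf]
        have e1 := pd_sum' Finset.univ
          (fun (m : Fin (ℓ + 1)) => fun x => ∑ jj : Fin (m : ℕ) → Fin n,
            c m jj x * pdIter (m : ℕ) jj f x) b
          (fun m _ => Sm.diff' (ContDiff.sum fun jj _ => hterm m jj))
        rw [e1]
        funext x
        apply Finset.sum_congr rfl
        intro m _
        have e2 := pd_sum' Finset.univ
          (fun jj => fun x => c m jj x * pdIter (m : ℕ) jj f x) b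
          (fun jj _ => Sm.diff' (hterm m jj))
        rw [e2]
        apply Finset.sum_congr rfl
        intro jj _
        rw [pd_mul' (c m jj) (pdIter (m : ℕ) jj f) b (Sm.diff' (hc m jj))
          (Sm.diff' (hsmP m jj))]
      have hterm2 : ∀ (b : Fin n) m jj, Sm (fun x =>
          pd b (c m jj) x * pdIter (m : ℕ) jj f x
            + c m jj x * pd b (pdIter (m : ℕ) jj f) x) :=
        fun b m jj => ((Sm.pd' (hc m jj) b).mul (hsmP m jj)).add
          ((hc m jj).mul (Sm.pd' (hsmP m jj) b))
      -- second derivative of D f at x₀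
      have hpd2 : ∀ a b, pd a (pd b (D f)) x₀ = ∑ m : Fin (ℓ + 1), ∑ jj : Fin (m : ℕ) → Fin n,
          (pd a (pd b (c m jj)) x₀ * pdIter (m : ℕ) jj f x₀
            + pd b (c m jj) x₀ * pd a (pdIter (m : ℕ) jj f) x₀
            + pd a (c m jj) x₀ * pd b (pdIter (m : ℕ) jj f) x₀
            + c m jj x₀ * pd a (pd b (pdIter (m : ℕ) jj f)) x₀) := by
        intro a b
        rw [hpdDf b]
        have e1 := pd_sum' Finset.univ
          (fun (m : Fin (ℓ + 1)) => fun x => ∑ jj : Fin (m : ℕ) → Fin n,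
            (pd b (c m jj) x * pdIter (m : ℕ) jj f x
              + c m jj x * pd b (pdIter (m : ℕ) jj f) x)) a
          (fun m _ => Sm.diff' (ContDiff.sum fun jj _ => hterm2 b m jj))
        rw [e1]
        apply Finset.sum_congr rfl
        intro m _
        have e2 := pd_sum' Finset.univ
          (fun jj => fun x => pd b (c m jj) x * pdIter (m : ℕ) jj f x
            + c m jj x * pd b (pdIter (m : ℕ) jj f) x) a
          (fun jj _ => Sm.diff' (hterm2 b m jj))
        rw [e2]
        apply Finset.sum_congr rfl
        intro jj _
        have e3 := pd_add' (fun x => pd b (c m jj) x * pdIter (m : ℕ) jj f x)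
          (fun x => c m jj x * pd b (pdIter (m : ℕ) jj f) x) a
          (Sm.diff' ((Sm.pd' (hc m jj) b).mul (hsmP m jj)))
          (Sm.diff' ((hc m jj).mul (Sm.pd' (hsmP m jj) b)))
        rw [e3, pd_mul' (pd b (c m jj)) (pdIter (m : ℕ) jj f) a
            (Sm.diff' (Sm.pd' (hc m jj) b)) (Sm.diff' (hsmP m jj)),
          pd_mul' (c m jj) (pd b (pdIter (m : ℕ) jj f)) a
            (Sm.diff' (hc m jj)) (Sm.diff' (Sm.pd' (hsmP m jj) b))]
        ring
      -- value of D (lap f)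
      have hDlapf : D (lap ginv f) x₀ = ∑ p : Fin n × Fin n, ginv p.1 p.2 *
          ∑ m : Fin (ℓ + 1), ∑ jj : Fin (m : ℕ) → Fin n,
            c m jj x₀ * pd p.1 (pd p.2 (pdIter (m : ℕ) jj f)) x₀ := by
        rw [hD (lap ginv f) x₀]
        have step : ∀ (m : Fin (ℓ + 1)) (jj : Fin (m : ℕ) → Fin n),
            c m jj x₀ * pdIter (m : ℕ) jj (lap ginv f) x₀
              = ∑ p : Fin n × Fin n, ginv p.1 p.2 *
                  (c m jj x₀ * pd p.1 (pd p.2 (pdIter (m : ℕ) jj f)) x₀) := by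
          intro m jj
          rw [pdIter_lap_comm' ginv hf (m : ℕ) jj]
          have e4 : lap ginv (pdIter (m : ℕ) jj f) x₀
              = ∑ p : Fin n × Fin n, ginv p.1 p.2 * pd p.1 (pd p.2 (pdIter (m : ℕ) jj f)) x₀ := by
            rw [Fintype.sum_prod_type]
            rfl
          rw [e4, Finset.mul_sum]
          apply Finset.sum_congr rfl
          intro p _
          ring
        calc ∑ m : Fin (ℓ + 1), ∑ jj : Fin (m : ℕ) → Fin n,
              c m jj x₀ * pdIter (m : ℕ) jj (lap ginv f) x₀
            = ∑ m : Fin (ℓ + 1), ∑ jj : Fin (m : ℕ) → Fin n, ∑ p : Fin n × Fin n,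
                ginv p.1 p.2 * (c m jj x₀ * pd p.1 (pd p.2 (pdIter (m : ℕ) jj f)) x₀) := by
              apply Finset.sum_congr rfl
              intro m _
              apply Finset.sum_congr rfl
              intro jj _
              exact step m jj
          _ = ∑ m : Fin (ℓ + 1), ∑ p : Fin n × Fin n, ∑ jj : Fin (m : ℕ) → Fin n,
                ginv p.1 p.2 * (c m jj x₀ * pd p.1 (pd p.2 (pdIter (m : ℕ) jj f)) x₀) := by
              apply Finset.sum_congr rfl
              intro m _
              rw [Finset.sum_comm]
          _ = ∑ p : Fin n × Fin n, ∑ m : Fin (ℓ + 1), ∑ jj : Fin (m : ℕ) → Fin n,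
                ginv p.1 p.2 * (c m jj x₀ * pd p.1 (pd p.2 (pdIter (m : ℕ) jj f)) x₀) := by
              rw [Finset.sum_comm]
          _ = ∑ p : Fin n × Fin n, ginv p.1 p.2 *
                ∑ m : Fin (ℓ + 1), ∑ jj : Fin (m : ℕ) → Fin n,
                  c m jj x₀ * pd p.1 (pd p.2 (pdIter (m : ℕ) jj f)) x₀ := by
              apply Finset.sum_congr rfl
              intro p _
              rw [Finset.mul_sum]
              apply Finset.sum_congr rfl
              intro m _
              rw [Finset.mul_sum]
      -- value of lap (D f)
      have hlapDf : lap ginv (D f) x₀ = ∑ p : Fin n × Fin n, ginv p.1 p.2 *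
          ∑ m : Fin (ℓ + 1), ∑ jj : Fin (m : ℕ) → Fin n,
            (pd p.1 (pd p.2 (c m jj)) x₀ * pdIter (m : ℕ) jj f x₀
              + pd p.2 (c m jj) x₀ * pd p.1 (pdIter (m : ℕ) jj f) x₀
              + pd p.1 (c m jj) x₀ * pd p.2 (pdIter (m : ℕ) jj f) x₀
              + c m jj x₀ * pd p.1 (pd p.2 (pdIter (m : ℕ) jj f)) x₀) := by
        have e5 : lap ginv (D f) x₀
            = ∑ p : Fin n × Fin n, ginv p.1 p.2 * pd p.1 (pd p.2 (D f)) x₀ := by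
          rw [Fintype.sum_prod_type]
          rfl
        rw [e5]
        apply Finset.sum_congr rfl
        intro p _
        rw [hpd2 p.1 p.2]
      -- subtract
      have hid := hcomm f hf x₀
      rw [hlapDf, hDlapf] at hid
      have hsum0 : ∑ p : Fin n × Fin n, ginv p.1 p.2 *
          (∑ m : Fin (ℓ + 1), ∑ jj : Fin (m : ℕ) → Fin n,
            (pd p.1 (pd p.2 (c m jj)) x₀ * pdIter (m : ℕ) jj f x₀
              + pd p.2 (c m jj) x₀ * pd p.1 (pdIter (m : ℕ) jj f) x₀
              + pd p.1 (c m jj) x₀ * pd p.2 (pdIter (m : ℕ) jj f) x₀)) = 0 := by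
        have hsplit : ∑ p : Fin n × Fin n, ginv p.1 p.2 *
            (∑ m : Fin (ℓ + 1), ∑ jj : Fin (m : ℕ) → Fin n,
              (pd p.1 (pd p.2 (c m jj)) x₀ * pdIter (m : ℕ) jj f x₀
                + pd p.2 (c m jj) x₀ * pd p.1 (pdIter (m : ℕ) jj f) x₀
                + pd p.1 (c m jj) x₀ * pd p.2 (pdIter (m : ℕ) jj f) x₀
                + c m jj x₀ * pd p.1 (pd p.2 (pdIter (m : ℕ) jj f)) x₀))
            = (∑ p : Fin n × Fin n, ginv p.1 p.2 *
                (∑ m : Fin (ℓ + 1), ∑ jj : Fin (m : ℕ) → Fin n,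
                  (pd p.1 (pd p.2 (c m jj)) x₀ * pdIter (m : ℕ) jj f x₀
                    + pd p.2 (c m jj) x₀ * pd p.1 (pdIter (m : ℕ) jj f) x₀
                    + pd p.1 (c m jj) x₀ * pd p.2 (pdIter (m : ℕ) jj f) x₀)))
              + ∑ p : Fin n × Fin n, ginv p.1 p.2 *
                  ∑ m : Fin (ℓ + 1), ∑ jj : Fin (m : ℕ) → Fin n,
                    c m jj x₀ * pd p.1 (pd p.2 (pdIter (m : ℕ) jj f)) x₀ := by
          rw [← Finset.sum_add_distrib]
          apply Finset.sum_congr rfl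
          intro p _
          rw [← mul_add]
          congr 1
          rw [← Finset.sum_add_distrib]
          apply Finset.sum_congr rfl
          intro m _
          rw [← Finset.sum_add_distrib]
        rw [hsplit] at hid
        linarith
      -- vanishing of low-order derivatives
      have hP0 : ∀ (m : Fin (ℓ + 1)) (jj : Fin (m : ℕ) → Fin n),
          pdIter (m : ℕ) jj f x₀ = 0 := by
        intro m jj
        rw [hfdef]
        apply pdIter_Ftest_zero' i x₀ (m : ℕ) Finset.univ jj
        rw [Finset.card_univ, Fintype.card_fin]
        exact m.isLt
      have hP1 : ∀ (m : Fin (ℓ + 1)), m ≠ Fin.last ℓ →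
          ∀ (a : Fin n) (jj : Fin (m : ℕ) → Fin n),
          pd a (pdIter (m : ℕ) jj f) x₀ = 0 := by
        intro m hm a jj
        rw [pd_pdIter, hfdef]
        apply pdIter_Ftest_zero' i x₀ ((m : ℕ) + 1) Finset.univ (Fin.cons a jj)
        rw [Finset.card_univ, Fintype.card_fin]
        have hlt : (m : ℕ) < ℓ := by
          rcases lt_or_eq_of_le (Nat.lt_succ_iff.mp m.isLt) with h | h
          · exact h
          · exact absurd (Fin.ext h : m = Fin.last ℓ) hm
        omega
      -- reduce to the top order m = last
      have hsum1 : ∑ p : Fin n × Fin n, ginv p.1 p.2 *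
          (∑ jj : Fin ℓ → Fin n,
            (pd p.2 (c (Fin.last ℓ) jj) x₀ * pd p.1 (pdIter ℓ jj f) x₀
              + pd p.1 (c (Fin.last ℓ) jj) x₀ * pd p.2 (pdIter ℓ jj f) x₀)) = 0 := by
        rw [← hsum0]
        apply Finset.sum_congr rfl
        intro p _
        congr 1
        symm
        rw [Finset.sum_eq_single (Fin.last ℓ)]
        · apply Finset.sum_congr rfl
          intro jj _
          rw [hP0 (Fin.last ℓ) jj, mul_zero, zero_add]
          rfl
        · intro m _ hm
          apply Finset.sum_eq_zero
          intro jj _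
          rw [hP0 m jj, mul_zero, zero_add, hP1 m hm p.1 jj, hP1 m hm p.2 jj,
            mul_zero, mul_zero, add_zero]
        · intro h
          exact absurd (Finset.mem_univ _) h
      -- top derivative values
      have hW : ∀ (a : Fin n) (jj : Fin ℓ → Fin n),
          pd a (pdIter ℓ jj f) x₀
            = ∑ σ : Equiv.Perm (Fin (ℓ + 1)),
                (if i (σ 0) = a then (1:ℝ) else 0)
                  * ∏ k : Fin ℓ, (if i (σ k.succ) = jj k then (1:ℝ) else 0) := by
        intro a jj
        rw [pd_pdIter, hfdef, pdIter_Ftest_univ' i x₀ (Fin.cons a jj)]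
        apply Finset.sum_congr rfl
        intro σ _
        rw [Fin.prod_univ_succ]
        congr 1
      -- the unsymmetrized quantity
      have hswap : ∑ p : Fin n × Fin n, ginv p.1 p.2 *
            ∑ jj : Fin ℓ → Fin n,
              pd p.1 (c (Fin.last ℓ) jj) x₀ * pd p.2 (pdIter ℓ jj f) x₀
          = ∑ p : Fin n × Fin n, ginv p.1 p.2 *
            ∑ jj : Fin ℓ → Fin n,
              pd p.2 (c (Fin.last ℓ) jj) x₀ * pd p.1 (pdIter ℓ jj f) x₀ := by
        apply Fintype.sum_equiv (Equiv.prodComm (Fin n) (Fin n))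
        intro p
        rw [hsymg p.1 p.2]
        rfl
      have hK0 : ∑ p : Fin n × Fin n, ginv p.1 p.2 *
            ∑ jj : Fin ℓ → Fin n,
              pd p.2 (c (Fin.last ℓ) jj) x₀ * pd p.1 (pdIter ℓ jj f) x₀ = 0 := by
        have h2 : (∑ p : Fin n × Fin n, ginv p.1 p.2 *
              ∑ jj : Fin ℓ → Fin n,
                pd p.2 (c (Fin.last ℓ) jj) x₀ * pd p.1 (pdIter ℓ jj f) x₀)
            + (∑ p : Fin n × Fin n, ginv p.1 p.2 *
              ∑ jj : Fin ℓ → Fin n,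
                pd p.1 (c (Fin.last ℓ) jj) x₀ * pd p.2 (pdIter ℓ jj f) x₀) = 0 := by
          rw [← hsum1, ← Finset.sum_add_distrib]
          apply Finset.sum_congr rfl
          intro p _
          rw [← mul_add, ← Finset.sum_add_distrib]
        rw [hswap] at h2
        linarith
      -- collapse the deltas
      rw [← hK0]
      symm
      calc ∑ p : Fin n × Fin n, ginv p.1 p.2 *
            ∑ jj : Fin ℓ → Fin n,
              pd p.2 (c (Fin.last ℓ) jj) x₀ * pd p.1 (pdIter ℓ jj f) x₀
          = ∑ σ : Equiv.Perm (Fin (ℓ + 1)), ∑ p : Fin n × Fin n, ∑ jj : Fin ℓ → Fin n,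
              ginv p.1 p.2 * (pd p.2 (c (Fin.last ℓ) jj) x₀ *
                ((if i (σ 0) = p.1 then (1:ℝ) else 0)
                  * ∏ k : Fin ℓ, (if i (σ k.succ) = jj k then (1:ℝ) else 0))) := by
            rw [Finset.sum_comm]
            apply Finset.sum_congr rfl
            intro p _
            calc ginv p.1 p.2 * ∑ jj : Fin ℓ → Fin n,
                  pd p.2 (c (Fin.last ℓ) jj) x₀ * pd p.1 (pdIter ℓ jj f) x₀
                = ∑ jj : Fin ℓ → Fin n, ∑ σ : Equiv.Perm (Fin (ℓ + 1)),
                    ginv p.1 p.2 * (pd p.2 (c (Fin.last ℓ) jj) x₀ *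
                      ((if i (σ 0) = p.1 then (1:ℝ) else 0)
                        * ∏ k : Fin ℓ, (if i (σ k.succ) = jj k then (1:ℝ) else 0))) := by
                  rw [Finset.mul_sum]
                  apply Finset.sum_congr rfl
                  intro jj _
                  rw [hW p.1 jj, Finset.mul_sum, Finset.mul_sum]
              _ = ∑ σ : Equiv.Perm (Fin (ℓ + 1)), ∑ jj : Fin ℓ → Fin n,
                    ginv p.1 p.2 * (pd p.2 (c (Fin.last ℓ) jj) x₀ *
                      ((if i (σ 0) = p.1 then (1:ℝ) else 0)
                        * ∏ k : Fin ℓ, (if i (σ k.succ) = jj k then (1:ℝ) else 0))) := by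
                  rw [Finset.sum_comm]
        _ = ∑ σ : Equiv.Perm (Fin (ℓ + 1)),
              pdUp ginv (i (σ 0)) (c (Fin.last ℓ) (fun j => i (σ j.succ))) x₀ := by
            apply Finset.sum_congr rfl
            intro σ _
            have e0 : ∀ (a b : Fin n) (jj : Fin ℓ → Fin n),
                ginv a b * (pd b (c (Fin.last ℓ) jj) x₀ *
                  ((if i (σ 0) = a then (1:ℝ) else 0)
                    * ∏ k : Fin ℓ, (if i (σ k.succ) = jj k then (1:ℝ) else 0)))
                = if i (σ 0) = a then
                    (if (fun k => i (σ k.succ)) = jj then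
                      ginv a b * pd b (c (Fin.last ℓ) jj) x₀ else 0) else 0 := by
              intro a b jj
              rw [prod_delta (fun k => i (σ k.succ)) jj]
              by_cases h1 : i (σ 0) = a <;> by_cases h2 : (fun k => i (σ k.succ)) = jj <;>
                simp [h1, h2]
            calc ∑ p : Fin n × Fin n, ∑ jj : Fin ℓ → Fin n,
                  ginv p.1 p.2 * (pd p.2 (c (Fin.last ℓ) jj) x₀ *
                    ((if i (σ 0) = p.1 then (1:ℝ) else 0)
                      * ∏ k : Fin ℓ, (if i (σ k.succ) = jj k then (1:ℝ) else 0)))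
                = ∑ a : Fin n, ∑ b : Fin n, ∑ jj : Fin ℓ → Fin n,
                    (if i (σ 0) = a then
                      (if (fun k => i (σ k.succ)) = jj then
                        ginv a b * pd b (c (Fin.last ℓ) jj) x₀ else 0) else 0) := by
                  rw [Fintype.sum_prod_type]
                  apply Finset.sum_congr rfl
                  intro a _
                  apply Finset.sum_congr rfl
                  intro b _
                  apply Finset.sum_congr rfl
                  intro jj _
                  exact e0 a b jj
              _ = ∑ a : Fin n, (if i (σ 0) = a then
                      (∑ b : Fin n, ∑ jj : Fin ℓ → Fin n,
                        (if (fun k => i (σ k.succ)) = jj then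
                          ginv a b * pd b (c (Fin.last ℓ) jj) x₀ else 0)) else 0) := by
                  apply Finset.sum_congr rfl
                  intro a _
                  by_cases h1 : i (σ 0) = a
                  · rw [if_pos h1]
                    apply Finset.sum_congr rfl
                    intro b _
                    apply Finset.sum_congr rfl
                    intro jj _
                    rw [if_pos h1]
                  · rw [if_neg h1]
                    apply Finset.sum_eq_zero
                    intro b _
                    apply Finset.sum_eq_zero
                    intro jj _
                    rw [if_neg h1]
              _ = ∑ b : Fin n, ∑ jj : Fin ℓ → Fin n,
                    (if (fun k => i (σ k.succ)) = jj then
                      ginv (i (σ 0)) b * pd b (c (Fin.last ℓ) jj) x₀ else 0) := by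
                  rw [Finset.sum_ite_eq]
                  rw [if_pos (Finset.mem_univ _)]
              _ = ∑ b : Fin n, ginv (i (σ 0)) b *
                    pd b (c (Fin.last ℓ) (fun k => i (σ k.succ))) x₀ := by
                  apply Finset.sum_congr rfl
                  intro b _
                  rw [Finset.sum_ite_eq]
                  rw [if_pos (Finset.mem_univ _)]
                  rfl
              _ = pdUp ginv (i (σ 0)) (c (Fin.last ℓ) (fun j => i (σ j.succ))) x₀ := rfl
    -- transfer from c to V
    have expand : ∀ t : Fin ℓ → Fin n, ∀ a : Fin n,
        pdUp ginv a (V t) x₀ = (ℓ.factorial : ℝ)⁻¹ *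
          ∑ τ : Equiv.Perm (Fin ℓ), pdUp ginv a (c (Fin.last ℓ) (t ∘ τ)) x₀ := by
      intro t a
      show (∑ b, ginv a b * pd b (V t) x₀) = _
      have hpd : ∀ b, pd b (V t) x₀ = (ℓ.factorial : ℝ)⁻¹ *
          ∑ τ : Equiv.Perm (Fin ℓ), pd b (c (Fin.last ℓ) (t ∘ τ)) x₀ := by
        intro b
        rw [hVfun t]
        have e1 := pd_const_mul'
          (fun x => ∑ σ : Equiv.Perm (Fin ℓ), c (Fin.last ℓ) (t ∘ σ) x)
          ((ℓ.factorial : ℝ)⁻¹) b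
          (Sm.diff' (ContDiff.sum fun τ _ => hc (Fin.last ℓ) (t ∘ τ)))
        rw [e1]
        have e2 := pd_sum' Finset.univ (fun (τ : Equiv.Perm (Fin ℓ)) => c (Fin.last ℓ) (t ∘ τ))
          b (fun τ _ => Sm.diff' (hc (Fin.last ℓ) (t ∘ τ)))
        rw [e2]
      calc (∑ b, ginv a b * pd b (V t) x₀)
          = ∑ b, (ℓ.factorial : ℝ)⁻¹ *
              ∑ τ : Equiv.Perm (Fin ℓ), ginv a b * pd b (c (Fin.last ℓ) (t ∘ τ)) x₀ := by
            apply Finset.sum_congr rfl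
            intro b _
            rw [hpd b]
            simp only [Finset.mul_sum]
            apply Finset.sum_congr rfl
            intro τ _
            ring
        _ = (ℓ.factorial : ℝ)⁻¹ * ∑ b, ∑ τ : Equiv.Perm (Fin ℓ),
              ginv a b * pd b (c (Fin.last ℓ) (t ∘ τ)) x₀ := by
            rw [Finset.mul_sum]
        _ = (ℓ.factorial : ℝ)⁻¹ *
              ∑ τ : Equiv.Perm (Fin ℓ), pdUp ginv a (c (Fin.last ℓ) (t ∘ τ)) x₀ := by
            congr 1
            rw [Finset.sum_comm]
            rfl
    calc ∑ σ : Equiv.Perm (Fin (ℓ + 1)),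
          pdUp ginv (i (σ 0)) (V (fun j => i (σ j.succ))) x₀
        = ∑ σ : Equiv.Perm (Fin (ℓ + 1)), (ℓ.factorial : ℝ)⁻¹ *
            ∑ τ : Equiv.Perm (Fin ℓ),
              pdUp ginv (i (σ 0)) (c (Fin.last ℓ) ((fun j => i (σ j.succ)) ∘ τ)) x₀ := by
          apply Finset.sum_congr rfl
          intro σ _
          rw [expand]
      _ = (ℓ.factorial : ℝ)⁻¹ * ∑ τ : Equiv.Perm (Fin ℓ),
            ∑ σ : Equiv.Perm (Fin (ℓ + 1)),
              pdUp ginv (i (σ 0)) (c (Fin.last ℓ) ((fun j => i (σ j.succ)) ∘ τ)) x₀ := by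
          rw [← Finset.mul_sum, Finset.sum_comm]
      _ = 0 := by
          rw [mul_eq_zero]
          right
          apply Finset.sum_eq_zero
          intro τ _
          calc ∑ σ : Equiv.Perm (Fin (ℓ + 1)),
                pdUp ginv (i (σ 0)) (c (Fin.last ℓ) ((fun j => i (σ j.succ)) ∘ τ)) x₀
              = ∑ σ : Equiv.Perm (Fin (ℓ + 1)),
                pdUp ginv (i (σ 0)) (c (Fin.last ℓ) (fun j => i (σ j.succ))) x₀ := by
                apply Fintype.sum_equiv
                  (Equiv.mulRight (Equiv.Perm.decomposeFin.symm (0, τ)))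
                intro σ
                simp only [Equiv.coe_mulRight]
                have h0 : (σ * Equiv.Perm.decomposeFin.symm (0, τ)) 0 = σ 0 := by
                  rw [Equiv.Perm.mul_apply, Equiv.Perm.decomposeFin_symm_apply_zero]
                have hsucc : ∀ j : Fin ℓ,
                    (σ * Equiv.Perm.decomposeFin.symm (0, τ)) j.succ = σ (τ j).succ := by
                  intro j
                  rw [Equiv.Perm.mul_apply, Equiv.Perm.decomposeFin_symm_apply_succ]
                  simp
                show pdUp ginv (i (σ 0)) (c (Fin.last ℓ) ((fun j => i (σ j.succ)) ∘ τ)) x₀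
                  = pdUp ginv (i ((σ * _) 0))
                      (c (Fin.last ℓ) (fun j => i ((σ * _) j.succ))) x₀
                rw [h0]
                congr 1
            _ = 0 := key
    done
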